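/- Let $x_0 \in \mathbb{R}^n$ and define two state sequences: the consolidated prediction $\bar x_{t+1} = A\bar x_t + B u_t$ with $\bar x_0 = x_0$, and local states $x^{(t)}_t$ satisfying $x^{(0)}_0 = x_0$ and $|A x^{(t)}_t + B u_t - x^{(t+1)}_{t+1}| \le 2\epsilon_{z_{t+1}}\mathbf{1}_n$ componentwise for all $t$. Then for every $t \ge 1$, $\|\bar x_t - x^{(t)}_t\|_\infty \le 2\sum_{j=0}^{t-1}\|A^j\|\,\epsilon_{z_{t-j}}$, where $\|A^j\|$ is the operator norm induced by the infinity norm. -/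
import Mathlib


attribute [local instance] Matrix.linftyOpNormedAddCommGroup

theorem stmt1 (n m : ℕ) (A : Matrix (Fin n) (Fin n) ℝ) (B : Matrix (Fin n) (Fin m) ℝ)
    (u : ℕ → Fin m → ℝ) (εz : ℕ → ℝ) (hεz : ∀ t, 0 ≤ εz t)
    (x0 : Fin n → ℝ) (xbar xloc : ℕ → Fin n → ℝ)
    (hbar0 : xbar 0 = x0)
    (hbar : ∀ t, xbar (t + 1) = A.mulVec (xbar t) + B.mulVec (u t))
    (hloc0 : xloc 0 = x0)
    (hloc : ∀ t i, |(A.mulVec (xloc t) + B.mulVec (u t)) i - xloc (t + 1) i| ≤ 2 * εz (t + 1)) :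
    ∀ t : ℕ, 1 ≤ t →
      ‖xbar t - xloc t‖ ≤ 2 * ∑ j ∈ Finset.range t, ‖A ^ j‖ * εz (t - j) := by
  set d : ℕ → Fin n → ℝ :=
    fun s => xbar (s + 1) - xloc (s + 1) - A.mulVec (xbar s - xloc s) with hd
  have hdnorm : ∀ s, ‖d s‖ ≤ 2 * εz (s + 1) := by
    intro s
    rw [pi_norm_le_iff_of_nonneg (by have := hεz (s + 1); linarith)]
    intro i
    have h := hloc s i
    have heq : d s i = (A.mulVec (xloc s) + B.mulVec (u s)) i - xloc (s + 1) i := by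
      simp only [hd, hbar s, Matrix.mulVec_sub, Pi.sub_apply, Pi.add_apply]
      ring
    rw [Real.norm_eq_abs, heq]
    exact h
  have heq : ∀ t : ℕ, xbar t - xloc t
      = ∑ j ∈ Finset.range t, (A ^ j).mulVec (d (t - 1 - j)) := by
    intro t
    induction t with
    | zero => simp [hbar0, hloc0]
    | succ t ih =>
      have hstep : xbar (t + 1) - xloc (t + 1) = A.mulVec (xbar t - xloc t) + d t := by
        simp [hd]
      rw [hstep, ih, Finset.sum_range_succ']
      have hmv : A.mulVec (∑ j ∈ Finset.range t, (A ^ j).mulVec (d (t - 1 - j)))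
          = ∑ j ∈ Finset.range t, (A ^ (j + 1)).mulVec (d (t - 1 - j)) := by
        rw [← Matrix.mulVecLin_apply, map_sum]
        refine Finset.sum_congr rfl fun j _ => ?_
        rw [Matrix.mulVecLin_apply, Matrix.mulVec_mulVec, ← pow_succ']
      rw [hmv]
      congr 1
      · refine Finset.sum_congr rfl fun j hj => ?_
        have h2 : t + 1 - 1 - (j + 1) = t - 1 - j := by omega
        rw [h2]
      · simp
  intro t ht
  rw [heq t]
  calc ‖∑ j ∈ Finset.range t, (A ^ j).mulVec (d (t - 1 - j))‖
      ≤ ∑ j ∈ Finset.range t, ‖(A ^ j).mulVec (d (t - 1 - j))‖ := norm_sum_le _ _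
    _ ≤ ∑ j ∈ Finset.range t, ‖A ^ j‖ * (2 * εz (t - j)) := by
        refine Finset.sum_le_sum fun j hj => ?_
        refine (Matrix.linfty_opNorm_mulVec _ _).trans ?_
        have h1 : t - 1 - j + 1 = t - j := by
          simp at hj; omega
        have := hdnorm (t - 1 - j)
        rw [h1] at this
        exact mul_le_mul_of_nonneg_left this (norm_nonneg _)
    _ = 2 * ∑ j ∈ Finset.range t, ‖A ^ j‖ * εz (t - j) := by
        rw [Finset.mul_sum]; exact Finset.sum_congr rfl fun j _ => by ring
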